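/- Let ν(z, z̄) = Σ_{j,k≥0} a_{jk} z^j z̄^k be real analytic near 0, write ν = g + Λ with g(z) = Σ_j a_{j0} z^j holomorphic and Λ(z,z̄) = Σ_{k≥1}(Σ_j a_{jk} z^j) z̄^k. Let n ∈ ℕ and define H(z,z̄) = Λ_{zz} - (n/z)Λ_z - 2g'(z)Λ_z - (Λ_z)². If z² H(z,z̄) is holomorphic in z (i.e. ∂_{z̄}(z² H) = 0) in a punctured neighborhood of 0, then H ≡ 0 there. -/

import Mathlib

open Complex Metric Filter Set Topology

/-- Wirtinger derivative `∂f/∂z = (∂f/∂x - i ∂f/∂y)/2`. -/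
noncomputable def wderiv (f : ℂ → ℂ) (z : ℂ) : ℂ :=
  (1/2 : ℂ) * (fderiv ℝ f z 1 - Complex.I * fderiv ℝ f z Complex.I)

/-- Conjugate Wirtinger derivative `∂f/∂z̄ = (∂f/∂x + i ∂f/∂y)/2`. -/
noncomputable def wbarderiv (f : ℂ → ℂ) (z : ℂ) : ℂ :=
  (1/2 : ℂ) * (fderiv ℝ f z 1 + Complex.I * fderiv ℝ f z Complex.I)

namespace AHPV

/-- `(j+1)^m * x^j` is summable for `0 ≤ x < 1`. -/
lemma summable_np_geo (m : ℕ) {x : ℝ} (hx : 0 ≤ x) (h1 : x < 1) :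
    Summable (fun j : ℕ => ((j : ℝ) + 1) ^ m * x ^ j) := by
  have hxn : ‖x‖ < 1 := by rwa [Real.norm_eq_abs, _root_.abs_of_nonneg hx]
  have h : Summable (fun j : ℕ => ∑ i ∈ Finset.range (m + 1),
      ((j : ℝ) ^ i * 1 ^ (m - i) * (m.choose i)) * x ^ j) := by
    apply summable_sum
    intro i _
    have := summable_pow_mul_geometric_of_norm_lt_one (R := ℝ) i hxn
    simpa [mul_comm, mul_assoc, mul_left_comm] using this.mul_left ((m.choose i : ℝ))
  refine h.congr fun j => ?_
  rw [← Finset.sum_mul, ← add_pow]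

/-- good decay of coefficients at all radii below `r`. -/
def Good (β : ℕ → ℂ) (r : ℝ) : Prop :=
  ∀ s : ℝ, 0 < s → s < r → ∃ B : ℝ, 0 ≤ B ∧ ∀ j, ‖β j‖ ≤ B * s⁻¹ ^ j

def Good₂ (b : ℕ → ℕ → ℂ) (r : ℝ) : Prop :=
  ∀ s : ℝ, 0 < s → s < r → ∃ B : ℝ, 0 ≤ B ∧ ∀ j k, ‖b j k‖ ≤ B * s⁻¹ ^ j * s⁻¹ ^ k

lemma good₂_col {b : ℕ → ℕ → ℂ} {r : ℝ} (hb : Good₂ b r) (k : ℕ) :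
    Good (fun j => b j k) r := by
  intro s hs hsr
  obtain ⟨B, hB0, hB⟩ := hb s hs hsr
  refine ⟨B * s⁻¹ ^ k, by positivity, fun j => ?_⟩
  calc ‖b j k‖ ≤ B * s⁻¹ ^ j * s⁻¹ ^ k := hB j k
    _ = B * s⁻¹ ^ k * s⁻¹ ^ j := by ring

/-- boundedness of `(j+1)*q^j`. -/
lemma exists_bound_np_geo {q : ℝ} (hq : 0 ≤ q) (h1 : q < 1) :
    ∃ M : ℝ, 0 ≤ M ∧ ∀ j : ℕ, ((j : ℝ) + 1) * q ^ j ≤ M := by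
  have hs := summable_np_geo 1 hq h1
  simp only [pow_one] at hs
  have h0 : Tendsto (fun j : ℕ => ((j : ℝ) + 1) * q ^ j) atTop (𝓝 0) := hs.tendsto_atTop_zero
  obtain ⟨M, hM⟩ := h0.bddAbove_range
  exact ⟨max M 0, le_max_right _ _, fun j => le_trans (hM (mem_range_self j)) (le_max_left _ _)⟩

/-- shift in the first index preserves `Good₂` (with radius loss absorbed). -/
lemma good₂_shift {b : ℕ → ℕ → ℂ} {r : ℝ} (hb : Good₂ b r) :
    Good₂ (fun j k => ((j : ℂ) + 1) * b (j + 1) k) r := by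
  intro s hs hsr
  set t := (s + r) / 2 with ht
  have hst : s < t := by simp only [ht]; linarith
  have htr : t < r := by simp only [ht]; linarith
  have ht0 : 0 < t := lt_trans hs hst
  obtain ⟨B, hB0, hB⟩ := hb t ht0 htr
  have hq0 : (0:ℝ) ≤ s / t := by positivity
  have hq1 : s / t < 1 := (div_lt_one ht0).mpr hst
  obtain ⟨M, hM0, hM⟩ := exists_bound_np_geo hq0 hq1
  refine ⟨B * t⁻¹ * M, by positivity, fun j k => ?_⟩
  have h1 : ‖((j : ℂ) + 1) * b (j + 1) k‖ = ((j:ℝ) + 1) * ‖b (j + 1) k‖ := by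
    rw [norm_mul]
    congr 1
    have : ((j : ℂ) + 1) = ((j + 1 : ℕ) : ℂ) := by push_cast; ring
    rw [this, Complex.norm_natCast]
    push_cast; ring
  rw [h1]
  have h2 : ((j:ℝ) + 1) * ‖b (j + 1) k‖ ≤ ((j:ℝ)+1) * (B * t⁻¹ ^ (j+1) * t⁻¹ ^ k) := by
    apply mul_le_mul_of_nonneg_left (hB (j+1) k) (by positivity)
  refine h2.trans ?_
  -- ((j+1) * (B * t⁻¹^(j+1) * t⁻¹^k)) ≤ B * t⁻¹ * M * s⁻¹^j * s⁻¹^k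
  have hkey : ((j:ℝ)+1) * t⁻¹ ^ j ≤ M * s⁻¹ ^ j := by
    have h3 := hM j
    calc ((j:ℝ)+1) * t⁻¹ ^ j = (((j:ℝ)+1) * (s/t) ^ j) * s⁻¹ ^ j := by
          rw [div_pow, inv_pow, inv_pow]; field_simp
      _ ≤ M * s⁻¹ ^ j := mul_le_mul_of_nonneg_right h3 (by positivity)
  have htk : t⁻¹ ^ k ≤ s⁻¹ ^ k := by
    apply pow_le_pow_left₀ (by positivity)
    exact inv_anti₀ hs hst.le
  calc ((j:ℝ)+1) * (B * t⁻¹ ^ (j+1) * t⁻¹ ^ k)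
      = (B * t⁻¹) * (((j:ℝ)+1) * t⁻¹ ^ j) * t⁻¹ ^ k := by ring
    _ ≤ (B * t⁻¹) * (M * s⁻¹ ^ j) * s⁻¹ ^ k := by
        apply mul_le_mul (mul_le_mul_of_nonneg_left hkey (by positivity)) htk (by positivity)
        positivity
    _ = B * t⁻¹ * M * s⁻¹ ^ j * s⁻¹ ^ k := by ring

lemma good_shift {β : ℕ → ℂ} {r : ℝ} (hβ : Good β r) :
    Good (fun j => ((j : ℂ) + 1) * β (j + 1)) r := by
  intro s hs hsr
  set t := (s + r) / 2 with ht
  have hst : s < t := by simp only [ht]; linarith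
  have htr : t < r := by simp only [ht]; linarith
  have ht0 : 0 < t := lt_trans hs hst
  obtain ⟨B, hB0, hB⟩ := hβ t ht0 htr
  have hq0 : (0:ℝ) ≤ s / t := by positivity
  have hq1 : s / t < 1 := (div_lt_one ht0).mpr hst
  obtain ⟨M, hM0, hM⟩ := exists_bound_np_geo hq0 hq1
  refine ⟨B * t⁻¹ * M, by positivity, fun j => ?_⟩
  have h1 : ‖((j : ℂ) + 1) * β (j + 1)‖ = ((j:ℝ) + 1) * ‖β (j + 1)‖ := by
    rw [norm_mul]
    congr 1
    have : ((j : ℂ) + 1) = ((j + 1 : ℕ) : ℂ) := by push_cast; ring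
    rw [this, Complex.norm_natCast]
    push_cast; ring
  rw [h1]
  have hkey : ((j:ℝ)+1) * t⁻¹ ^ j ≤ M * s⁻¹ ^ j := by
    have h3 := hM j
    calc ((j:ℝ)+1) * t⁻¹ ^ j = (((j:ℝ)+1) * (s/t) ^ j) * s⁻¹ ^ j := by
          rw [div_pow, inv_pow, inv_pow]; field_simp
      _ ≤ M * s⁻¹ ^ j := mul_le_mul_of_nonneg_right h3 (by positivity)
  calc ((j:ℝ)+1) * ‖β (j + 1)‖ ≤ ((j:ℝ)+1) * (B * t⁻¹ ^ (j+1)) :=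
        mul_le_mul_of_nonneg_left (hB (j+1)) (by positivity)
    _ = (B * t⁻¹) * (((j:ℝ)+1) * t⁻¹ ^ j) := by ring
    _ ≤ (B * t⁻¹) * (M * s⁻¹ ^ j) := mul_le_mul_of_nonneg_left hkey (by positivity)
    _ = B * t⁻¹ * M * s⁻¹ ^ j := by ring

noncomputable def psum (β : ℕ → ℂ) (z : ℂ) : ℂ := ∑' j, β j * z ^ j

def shift (β : ℕ → ℂ) : ℕ → ℂ := fun j => ((j : ℂ) + 1) * β (j + 1)

lemma good_shift' {β : ℕ → ℂ} {r : ℝ} (hβ : Good β r) : Good (shift β) r := good_shift hβ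

/-- summability of norms of power series terms below radius. -/
lemma psum_summable_norm {β : ℕ → ℂ} {r : ℝ} (hβ : Good β r) {z : ℂ} (hz : ‖z‖ < r) :
    Summable fun j => ‖β j * z ^ j‖ := by
  set s := (‖z‖ + r) / 2 with hs
  have h0 : 0 ≤ ‖z‖ := norm_nonneg z
  have hzs : ‖z‖ < s := by simp only [hs]; linarith
  have hsr : s < r := by simp only [hs]; linarith
  have hs0 : 0 < s := lt_of_le_of_lt h0 hzs
  obtain ⟨B, hB0, hB⟩ := hβ s hs0 hsr
  have hq1 : ‖z‖ / s < 1 := (div_lt_one hs0).mpr hzs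
  have hgeo : Summable fun j : ℕ => B * (‖z‖ / s) ^ j :=
    (summable_geometric_of_lt_one (by positivity) hq1).mul_left B
  refine Summable.of_nonneg_of_le (fun j => norm_nonneg _) (fun j => ?_) hgeo
  rw [norm_mul, norm_pow, div_pow]
  calc ‖β j‖ * ‖z‖ ^ j ≤ B * s⁻¹ ^ j * ‖z‖ ^ j :=
        mul_le_mul_of_nonneg_right (hB j) (by positivity)
    _ = B * (‖z‖ ^ j / s ^ j) := by rw [inv_pow]; ring
lemma psum_summable {β : ℕ → ℂ} {r : ℝ} (hβ : Good β r) {z : ℂ} (hz : ‖z‖ < r) :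
    Summable fun j => β j * z ^ j := (psum_summable_norm hβ hz).of_norm

/-- uniform bound for `psum` on closed balls below the radius. -/
lemma psum_bound {β : ℕ → ℂ} {r : ℝ} (hβ : Good β r) {s t : ℝ}
    (hs0 : 0 ≤ s) (hst : s < t) (htr : t < r) :
    ∃ C, 0 ≤ C ∧ ∀ z : ℂ, ‖z‖ ≤ s → ‖psum β z‖ ≤ C := by
  have ht0 : 0 < t := lt_of_le_of_lt hs0 hst
  obtain ⟨B, hB0, hB⟩ := hβ t ht0 htr
  have hq0 : (0:ℝ) ≤ s / t := by positivity
  have hq1 : s / t < 1 := (div_lt_one ht0).mpr hst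
  refine ⟨B * (1 - s / t)⁻¹, mul_nonneg hB0 (inv_nonneg.mpr (by linarith)), fun z hz => ?_⟩
  have hzr : ‖z‖ < r := lt_of_le_of_lt hz (hst.trans htr)
  have h1 : ‖psum β z‖ ≤ ∑' j, ‖β j * z ^ j‖ := norm_tsum_le_tsum_norm (psum_summable_norm hβ hzr)
  refine h1.trans ?_
  have h2 : ∀ j : ℕ, ‖β j * z ^ j‖ ≤ B * (s / t) ^ j := by
    intro j
    rw [norm_mul, norm_pow, div_pow]
    calc ‖β j‖ * ‖z‖ ^ j ≤ B * t⁻¹ ^ j * s ^ j := by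
          apply mul_le_mul (hB j) (pow_le_pow_left₀ (norm_nonneg z) hz j) (by positivity)
          positivity
      _ = B * (s ^ j / t ^ j) := by rw [inv_pow]; ring
  have hgeo : Summable fun j : ℕ => B * (s / t) ^ j :=
    (summable_geometric_of_lt_one hq0 hq1).mul_left B
  calc (∑' j, ‖β j * z ^ j‖) ≤ ∑' j, B * (s / t) ^ j :=
        Summable.tsum_le_tsum h2 (psum_summable_norm hβ hzr) hgeo
    _ = B * (1 - s/t)⁻¹ := by rw [tsum_mul_left, tsum_geometric_of_lt_one hq0 hq1]

/-- term-by-term differentiation of a power series given good coefficient decay. -/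
lemma psum_hasDerivAt {β : ℕ → ℂ} {r : ℝ} (hβ : Good β r) {z : ℂ} (hz : ‖z‖ < r) :
    HasDerivAt (psum β) (psum (shift β) z) z := by
  set s := (‖z‖ + r) / 2 with hsdef
  have h0 : 0 ≤ ‖z‖ := norm_nonneg z
  have hzs : ‖z‖ < s := by simp only [hsdef]; linarith
  have hsr : s < r := by simp only [hsdef]; linarith
  have hs0 : 0 < s := lt_of_le_of_lt h0 hzs
  set t := (s + r) / 2 with htdef
  have hst : s < t := by simp only [htdef]; linarith
  have htr : t < r := by simp only [htdef]; linarith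
  have ht0 : 0 < t := lt_trans hs0 hst
  obtain ⟨B, hB0, hB⟩ := good_shift' hβ t ht0 htr
  have hq0 : (0:ℝ) ≤ s / t := by positivity
  have hq1 : s / t < 1 := (div_lt_one ht0).mpr hst
  have hu : Summable fun j : ℕ => B * (s / t) ^ j :=
    (summable_geometric_of_lt_one hq0 hq1).mul_left B
  have hbound : ∀ (j : ℕ) (w : ℂ), w ∈ Metric.ball (0:ℂ) s →
      ‖shift β j * w ^ j‖ ≤ B * (s / t) ^ j := by
    intro j w hw
    rw [mem_ball_zero_iff] at hw
    rw [norm_mul, norm_pow, div_pow]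
    calc ‖shift β j‖ * ‖w‖ ^ j ≤ B * t⁻¹ ^ j * s ^ j := by
          apply mul_le_mul (hB j) (pow_le_pow_left₀ (norm_nonneg w) hw.le j) (by positivity)
          positivity
      _ = B * (s ^ j / t ^ j) := by rw [inv_pow]; ring
  have hf' : TendstoLocallyUniformlyOn
      (fun N (w : ℂ) => ∑ j ∈ Finset.range N, shift β j * w ^ j)
      (psum (shift β)) atTop (Metric.ball (0:ℂ) s) :=
    (tendstoUniformlyOn_tsum_nat hu hbound).tendstoLocallyUniformlyOn
  refine hasDerivAt_of_tendstoLocallyUniformlyOn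
    (f := fun N (w : ℂ) => ∑ j ∈ Finset.range (N+1), β j * w ^ j)
    Metric.isOpen_ball hf' ?_ ?_ (mem_ball_zero_iff.mpr hzs)
  · refine Eventually.of_forall fun N x hx => ?_
    have h1 : HasDerivAt (fun w : ℂ => ∑ j ∈ Finset.range (N+1), β j * w ^ j)
        (∑ j ∈ Finset.range (N+1), β j * ((j:ℂ) * x ^ (j-1))) x := by
      apply HasDerivAt.fun_sum
      intro j _
      exact (hasDerivAt_pow j x).const_mul (β j)
    have h2 : (∑ j ∈ Finset.range (N+1), β j * ((j:ℂ) * x ^ (j-1)))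
        = ∑ j ∈ Finset.range N, shift β j * x ^ j := by
      rw [Finset.sum_range_succ']
      have hco : ∀ j ∈ Finset.range N,
          β (j+1) * ((((j+1):ℕ):ℂ) * x ^ ((j+1)-1)) = shift β j * x ^ j := by
        intro j _
        simp only [shift, Nat.add_sub_cancel]
        push_cast
        ring
      rw [Finset.sum_congr rfl hco]
      simp
    rwa [h2] at h1
  · intro x hx
    rw [mem_ball_zero_iff] at hx
    have hsum := (psum_summable hβ (hx.trans hsr)).hasSum.tendsto_sum_nat
    exact hsum.comp (tendsto_add_atTop_nat 1)

noncomputable def cf (b : ℕ → ℕ → ℂ) (k : ℕ) (z : ℂ) : ℂ := psum (fun j => b j k) z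

def shift2 (b : ℕ → ℕ → ℂ) : ℕ → ℕ → ℂ := fun j k => ((j : ℂ) + 1) * b (j + 1) k

lemma good₂_shift2 {b : ℕ → ℕ → ℂ} {r : ℝ} (hb : Good₂ b r) : Good₂ (shift2 b) r :=
  good₂_shift hb

noncomputable def Sf (b : ℕ → ℕ → ℂ) (z : ℂ) : ℂ :=
  ∑' k, cf b k z * (starRingEnd ℂ z) ^ (k + 1)

noncomputable def Tf (b : ℕ → ℕ → ℂ) (z : ℂ) : ℂ :=
  ∑' k : ℕ, ((k : ℂ) + 1) * cf b k z * (starRingEnd ℂ z) ^ k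

lemma cf_hasDerivAt {b : ℕ → ℕ → ℂ} {r : ℝ} (hb : Good₂ b r) (k : ℕ) {z : ℂ}
    (hz : ‖z‖ < r) : HasDerivAt (fun w => cf b k w) (cf (shift2 b) k z) z :=
  psum_hasDerivAt (good₂_col hb k) hz

lemma cf_bound {b : ℕ → ℕ → ℂ} {r : ℝ} (hb : Good₂ b r) {s t : ℝ}
    (hs0 : 0 ≤ s) (hst : s < t) (htr : t < r) :
    ∃ C, 0 ≤ C ∧ ∀ (k : ℕ) (z : ℂ), ‖z‖ ≤ s → ‖cf b k z‖ ≤ C * t⁻¹ ^ k := by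
  have ht0 : 0 < t := lt_of_le_of_lt hs0 hst
  obtain ⟨B, hB0, hB⟩ := hb t ht0 htr
  have hq0 : (0:ℝ) ≤ s / t := by positivity
  have hq1 : s / t < 1 := (div_lt_one ht0).mpr hst
  refine ⟨B * (1 - s / t)⁻¹, mul_nonneg hB0 (inv_nonneg.mpr (by linarith)), fun k z hz => ?_⟩
  have hzr : ‖z‖ < r := lt_of_le_of_lt hz (hst.trans htr)
  have hcol : Good (fun j => b j k) r := good₂_col hb k
  have h1 : ‖cf b k z‖ ≤ ∑' j, ‖b j k * z ^ j‖ :=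
    norm_tsum_le_tsum_norm (psum_summable_norm hcol hzr)
  have h2 : ∀ j : ℕ, ‖b j k * z ^ j‖ ≤ (B * t⁻¹ ^ k) * (s / t) ^ j := by
    intro j
    rw [norm_mul, norm_pow, div_pow]
    calc ‖b j k‖ * ‖z‖ ^ j ≤ (B * t⁻¹ ^ j * t⁻¹ ^ k) * s ^ j := by
          apply mul_le_mul (hB j k) (pow_le_pow_left₀ (norm_nonneg z) hz j) (by positivity)
          positivity
      _ = (B * t⁻¹ ^ k) * (s ^ j / t ^ j) := by rw [inv_pow]; ring
  have hgeo : Summable fun j : ℕ => (B * t⁻¹ ^ k) * (s / t) ^ j :=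
    (summable_geometric_of_lt_one hq0 hq1).mul_left _
  calc ‖cf b k z‖ ≤ ∑' j, ‖b j k * z ^ j‖ := h1
    _ ≤ ∑' j, (B * t⁻¹ ^ k) * (s / t) ^ j :=
        Summable.tsum_le_tsum h2 (psum_summable_norm hcol hzr) hgeo
    _ = (B * t⁻¹ ^ k) * (1 - s/t)⁻¹ := by
        rw [tsum_mul_left, tsum_geometric_of_lt_one hq0 hq1]
    _ = (B * (1 - s/t)⁻¹) * t⁻¹ ^ k := by ring

/-- the conjugation continuous linear map over `ℝ`. -/
noncomputable def CJ : ℂ →L[ℝ] ℂ := Complex.conjCLE.toContinuousLinearMap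

lemma CJ_apply (v : ℂ) : CJ v = starRingEnd ℂ v := Complex.conjCLE_apply v

lemma norm_CJ_le : ‖CJ‖ ≤ 1 := by
  apply ContinuousLinearMap.opNorm_le_bound _ zero_le_one
  intro v
  rw [CJ_apply, one_mul]
  simp

/-- the real Fréchet derivative of the `k`-th term of `Sf`. -/
noncomputable def Dk (b : ℕ → ℕ → ℂ) (k : ℕ) (z : ℂ) : ℂ →L[ℝ] ℂ :=
  (cf (shift2 b) k z * (starRingEnd ℂ z) ^ (k+1)) • ContinuousLinearMap.id ℝ ℂ
    + (((k : ℂ) + 1) * cf b k z * (starRingEnd ℂ z) ^ k) • CJ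

lemma Dk_apply (b : ℕ → ℕ → ℂ) (k : ℕ) (z v : ℂ) :
    Dk b k z v = cf (shift2 b) k z * (starRingEnd ℂ z) ^ (k+1) * v
      + ((k : ℂ) + 1) * cf b k z * (starRingEnd ℂ z) ^ k * starRingEnd ℂ v := by
  simp [Dk, CJ_apply, smul_eq_mul]

lemma hasFDerivAt_term {b : ℕ → ℕ → ℂ} {r : ℝ} (hb : Good₂ b r) (k : ℕ) {z : ℂ}
    (hz : ‖z‖ < r) :
    HasFDerivAt (fun w => cf b k w * (starRingEnd ℂ w) ^ (k+1)) (Dk b k z) z := by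
  have hc : HasDerivAt (fun w => cf b k w) (cf (shift2 b) k z) z := cf_hasDerivAt hb k hz
  have hcF : HasFDerivAt (fun w => cf b k w)
      (((1 : ℂ →L[ℂ] ℂ).smulRight (cf (shift2 b) k z)).restrictScalars ℝ) z :=
    (hc.hasFDerivAt).restrictScalars ℝ
  have hconj : HasFDerivAt (fun w : ℂ => starRingEnd ℂ w) CJ z := by
    have h := CJ.hasFDerivAt (x := z)
    have he : (fun w : ℂ => starRingEnd ℂ w) = ⇑CJ := by
      funext w; rw [CJ_apply]
    rwa [he]
  have hpow : HasFDerivAt (fun w : ℂ => (starRingEnd ℂ w) ^ (k+1))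
      ((((1 : ℂ →L[ℂ] ℂ).smulRight ((((k:ℕ)+1 : ℕ) : ℂ) * (starRingEnd ℂ z) ^ k)).restrictScalars ℝ).comp CJ) z := by
    have hp := (hasDerivAt_pow (k+1) (starRingEnd ℂ z)).hasFDerivAt.restrictScalars ℝ
    exact hp.comp z hconj
  have hmul := hcF.mul' hpow
  refine hmul.congr_fderiv ?_
  ext v
  rw [Dk_apply]
  simp only [ContinuousLinearMap.add_apply, ContinuousLinearMap.smul_apply,
    ContinuousLinearMap.coe_comp', Function.comp_apply,
    ContinuousLinearMap.coe_restrictScalars', ContinuousLinearMap.smulRight_apply,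
    ContinuousLinearMap.one_apply, ContinuousLinearMap.smulRight_apply, CJ_apply,
    smul_eq_mul, op_smul_eq_mul]
  push_cast
  ring

lemma norm_conj_pow (z : ℂ) (k : ℕ) : ‖(starRingEnd ℂ z) ^ k‖ = ‖z‖ ^ k := by
  rw [norm_pow, RCLike.norm_conj]

lemma norm_Dk_le {b : ℕ → ℕ → ℂ} {r : ℝ} (hb : Good₂ b r) {s t : ℝ}
    (hs0 : 0 ≤ s) (hst : s < t) (htr : t < r) :
    ∃ C, 0 ≤ C ∧ ∀ (k : ℕ) (z : ℂ), ‖z‖ ≤ s →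
      ‖Dk b k z‖ ≤ C * (((k:ℝ) + 1) * (s/t) ^ k) := by
  obtain ⟨C1, hC10, hC1⟩ := cf_bound (good₂_shift2 hb) hs0 hst htr
  obtain ⟨C2, hC20, hC2⟩ := cf_bound hb hs0 hst htr
  have ht0 : 0 < t := lt_of_le_of_lt hs0 hst
  refine ⟨C1 * s + C2, by positivity, fun k z hz => ?_⟩
  have hzk : ‖z‖ ^ k ≤ s ^ k := pow_le_pow_left₀ (norm_nonneg z) hz k
  have hzk1 : ‖z‖ ^ (k+1) ≤ s ^ (k+1) := pow_le_pow_left₀ (norm_nonneg z) hz (k+1)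
  have h1 : ‖(cf (shift2 b) k z * (starRingEnd ℂ z) ^ (k+1)) •
      ContinuousLinearMap.id ℝ ℂ‖ ≤ (C1 * t⁻¹ ^ k) * s ^ (k+1) := by
    calc ‖(cf (shift2 b) k z * (starRingEnd ℂ z) ^ (k+1)) • ContinuousLinearMap.id ℝ ℂ‖
        ≤ ‖cf (shift2 b) k z * (starRingEnd ℂ z) ^ (k+1)‖ * ‖ContinuousLinearMap.id ℝ ℂ‖ :=
          ContinuousLinearMap.opNorm_smul_le _ _
      _ ≤ ‖cf (shift2 b) k z * (starRingEnd ℂ z) ^ (k+1)‖ * 1 :=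
          mul_le_mul_of_nonneg_left ContinuousLinearMap.norm_id_le (norm_nonneg _)
      _ = ‖cf (shift2 b) k z‖ * ‖z‖ ^ (k+1) := by rw [mul_one, norm_mul, norm_conj_pow]
      _ ≤ (C1 * t⁻¹ ^ k) * s ^ (k+1) := by
          apply mul_le_mul (hC1 k z hz) hzk1 (by positivity) (by positivity)
  have h2 : ‖(((k : ℂ) + 1) * cf b k z * (starRingEnd ℂ z) ^ k) • CJ‖
      ≤ ((k:ℝ) + 1) * (C2 * t⁻¹ ^ k) * s ^ k := by
    calc ‖(((k : ℂ) + 1) * cf b k z * (starRingEnd ℂ z) ^ k) • CJ‖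
        ≤ ‖((k : ℂ) + 1) * cf b k z * (starRingEnd ℂ z) ^ k‖ * ‖CJ‖ :=
          ContinuousLinearMap.opNorm_smul_le _ _
      _ ≤ ‖((k : ℂ) + 1) * cf b k z * (starRingEnd ℂ z) ^ k‖ * 1 :=
          mul_le_mul_of_nonneg_left norm_CJ_le (norm_nonneg _)
      _ = ((k:ℝ) + 1) * ‖cf b k z‖ * ‖z‖ ^ k := by
          rw [mul_one, norm_mul, norm_mul, norm_conj_pow]
          congr 2
          have : ((k : ℂ) + 1) = (((k+1 : ℕ)) : ℂ) := by push_cast; ring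
          rw [this, Complex.norm_natCast]; push_cast; ring
      _ ≤ ((k:ℝ) + 1) * (C2 * t⁻¹ ^ k) * s ^ k := by
          apply mul_le_mul (mul_le_mul_of_nonneg_left (hC2 k z hz) (by positivity)) hzk
            (by positivity) (by positivity)
  calc ‖Dk b k z‖ ≤ ‖(cf (shift2 b) k z * (starRingEnd ℂ z) ^ (k+1)) •
        ContinuousLinearMap.id ℝ ℂ‖ + ‖(((k : ℂ) + 1) * cf b k z * (starRingEnd ℂ z) ^ k) • CJ‖ :=
        norm_add_le _ _
    _ ≤ (C1 * t⁻¹ ^ k) * s ^ (k+1) + ((k:ℝ) + 1) * (C2 * t⁻¹ ^ k) * s ^ k := add_le_add h1 h2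
    _ ≤ (C1 * s + C2) * (((k:ℝ) + 1) * (s/t) ^ k) := by
        rw [div_pow]
        have hX0 : (0:ℝ) ≤ s ^ k / t ^ k := by positivity
        have e1 : ((k:ℝ) + 1) * (C2 * t⁻¹ ^ k) * s ^ k
            = C2 * (((k:ℝ)+1) * (s ^ k / t ^ k)) := by
          rw [inv_pow]; field_simp
        have e2 : (C1 * t⁻¹ ^ k) * s ^ (k+1) = (C1 * s) * (s ^ k / t ^ k) := by
          rw [inv_pow, pow_succ]; field_simp
        rw [e1, e2]
        have h4 : (C1 * s) * (s ^ k / t ^ k) ≤ (C1 * s) * (((k:ℝ)+1) * (s ^ k / t ^ k)) := by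
          apply mul_le_mul_of_nonneg_left _ (by positivity)
          nlinarith [hX0, Nat.cast_nonneg (α := ℝ) k]
        have e3 : (C1 * s + C2) * (((k:ℝ)+1) * (s ^ k / t ^ k))
            = (C1 * s) * (((k:ℝ)+1) * (s ^ k / t ^ k)) + C2 * (((k:ℝ)+1) * (s ^ k / t ^ k)) := by
          ring
        rw [e3]
        exact add_le_add_left h4 _

lemma Sf_summable_norm {b : ℕ → ℕ → ℂ} {r : ℝ} (hb : Good₂ b r) {z : ℂ} (hz : ‖z‖ < r) :
    Summable fun k => ‖cf b k z * (starRingEnd ℂ z) ^ (k+1)‖ := by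
  set t := (‖z‖ + r) / 2 with htdef
  have h0 : 0 ≤ ‖z‖ := norm_nonneg z
  have hzt : ‖z‖ < t := by simp only [htdef]; linarith
  have htr : t < r := by simp only [htdef]; linarith
  have ht0 : 0 < t := lt_of_le_of_lt h0 hzt
  obtain ⟨C, hC0, hC⟩ := cf_bound hb h0 hzt htr
  have hq0 : (0:ℝ) ≤ ‖z‖ / t := by positivity
  have hq1 : ‖z‖ / t < 1 := (div_lt_one ht0).mpr hzt
  refine Summable.of_nonneg_of_le (fun k => norm_nonneg _) (fun k => ?_)
    (((summable_geometric_of_lt_one hq0 hq1).mul_left (C * ‖z‖)))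
  rw [norm_mul, norm_conj_pow]
  calc ‖cf b k z‖ * ‖z‖ ^ (k+1) ≤ (C * t⁻¹ ^ k) * ‖z‖ ^ (k+1) :=
        mul_le_mul_of_nonneg_right (hC k z le_rfl) (by positivity)
    _ = (C * ‖z‖) * (‖z‖ / t) ^ k := by rw [div_pow, inv_pow, pow_succ]; field_simp

lemma Sf_summable {b : ℕ → ℕ → ℂ} {r : ℝ} (hb : Good₂ b r) {z : ℂ} (hz : ‖z‖ < r) :
    Summable fun k => cf b k z * (starRingEnd ℂ z) ^ (k+1) :=
  (Sf_summable_norm hb hz).of_norm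

lemma Tf_summable {b : ℕ → ℕ → ℂ} {r : ℝ} (hb : Good₂ b r) {z : ℂ} (hz : ‖z‖ < r) :
    Summable fun k : ℕ => ((k:ℂ) + 1) * cf b k z * (starRingEnd ℂ z) ^ k := by
  set t := (‖z‖ + r) / 2 with htdef
  have h0 : 0 ≤ ‖z‖ := norm_nonneg z
  have hzt : ‖z‖ < t := by simp only [htdef]; linarith
  have htr : t < r := by simp only [htdef]; linarith
  have ht0 : 0 < t := lt_of_le_of_lt h0 hzt
  obtain ⟨C, hC0, hC⟩ := cf_bound hb h0 hzt htr
  have hq0 : (0:ℝ) ≤ ‖z‖ / t := by positivity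
  have hq1 : ‖z‖ / t < 1 := (div_lt_one ht0).mpr hzt
  apply Summable.of_norm
  refine Summable.of_nonneg_of_le (fun k => norm_nonneg _) (fun k => ?_)
    (((summable_np_geo 1 hq0 hq1).mul_left C))
  rw [norm_mul, norm_mul, norm_conj_pow]
  have hn : ‖((k : ℂ) + 1)‖ = (k:ℝ) + 1 := by
    have : ((k : ℂ) + 1) = (((k+1 : ℕ)) : ℂ) := by push_cast; ring
    rw [this, Complex.norm_natCast]; push_cast; ring
  rw [hn]
  calc ((k:ℝ) + 1) * ‖cf b k z‖ * ‖z‖ ^ k ≤ ((k:ℝ) + 1) * (C * t⁻¹ ^ k) * ‖z‖ ^ k := by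
        apply mul_le_mul_of_nonneg_right
          (mul_le_mul_of_nonneg_left (hC k z le_rfl) (by positivity)) (by positivity)
    _ = C * (((k:ℝ) + 1) ^ 1 * (‖z‖ / t) ^ k) := by
        rw [div_pow, inv_pow, pow_one]; field_simp

lemma tsum_Dk {b : ℕ → ℕ → ℂ} {r : ℝ} (hb : Good₂ b r) {z : ℂ} (hz : ‖z‖ < r) :
    ∑' k, Dk b k z
      = (Sf (shift2 b) z) • ContinuousLinearMap.id ℝ ℂ + (Tf b z) • CJ := by
  unfold Dk
  rw [Summable.tsum_add (((Sf_summable (good₂_shift2 hb) hz)).smul_const _)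
      ((Tf_summable hb hz).smul_const _),
    Summable.tsum_smul_const (Sf_summable (good₂_shift2 hb) hz),
    Summable.tsum_smul_const (Tf_summable hb hz)]
  rfl

lemma Sf_hasFDerivAt {b : ℕ → ℕ → ℂ} {r : ℝ} (hb : Good₂ b r) {z : ℂ} (hz : ‖z‖ < r) :
    HasFDerivAt (Sf b)
      ((Sf (shift2 b) z) • ContinuousLinearMap.id ℝ ℂ + (Tf b z) • CJ) z := by
  rw [← tsum_Dk hb hz]
  set s := (‖z‖ + r) / 2 with hsdef
  have h0 : 0 ≤ ‖z‖ := norm_nonneg z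
  have hzs : ‖z‖ < s := by simp only [hsdef]; linarith
  have hsr : s < r := by simp only [hsdef]; linarith
  have hs0 : 0 < s := lt_of_le_of_lt h0 hzs
  set t := (s + r) / 2 with htdef
  have hst : s < t := by simp only [htdef]; linarith
  have htr : t < r := by simp only [htdef]; linarith
  have ht0 : 0 < t := lt_trans hs0 hst
  obtain ⟨C, hC0, hC⟩ := norm_Dk_le hb hs0.le hst htr
  have hq0 : (0:ℝ) ≤ s / t := by positivity
  have hq1 : s / t < 1 := (div_lt_one ht0).mpr hst
  have hu : Summable fun k : ℕ => C * (((k:ℝ) + 1) * (s/t) ^ k) := by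
    have := summable_np_geo 1 hq0 hq1
    simp only [pow_one] at this
    exact this.mul_left C
  have hbound : ∀ (k : ℕ) (w : ℂ), w ∈ Metric.ball (0:ℂ) s →
      ‖Dk b k w‖ ≤ C * (((k:ℝ) + 1) * (s/t) ^ k) := fun k w hw =>
    hC k w (mem_ball_zero_iff.mp hw).le
  have hf' : TendstoLocallyUniformlyOn
      (fun N (w : ℂ) => ∑ k ∈ Finset.range N, Dk b k w)
      (fun w => ∑' k, Dk b k w) atTop (Metric.ball (0:ℂ) s) :=
    (tendstoUniformlyOn_tsum_nat hu hbound).tendstoLocallyUniformlyOn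
  refine hasFDerivAt_of_tendstoLocallyUniformlyOn
    (f := fun N (w : ℂ) => ∑ k ∈ Finset.range N, cf b k w * (starRingEnd ℂ w) ^ (k+1))
    Metric.isOpen_ball hf' ?_ ?_ (mem_ball_zero_iff.mpr hzs)
  · intro N x hx
    apply HasFDerivAt.fun_sum
    intro k _
    exact hasFDerivAt_term hb k ((mem_ball_zero_iff.mp hx).trans hsr)
  · intro x hx
    exact (Sf_summable hb ((mem_ball_zero_iff.mp hx).trans hsr)).hasSum.tendsto_sum_nat

lemma Sf_wderiv {b : ℕ → ℕ → ℂ} {r : ℝ} (hb : Good₂ b r) {z : ℂ} (hz : ‖z‖ < r) :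
    wderiv (Sf b) z = Sf (shift2 b) z := by
  have hD := Sf_hasFDerivAt hb hz
  unfold wderiv
  rw [hD.fderiv]
  simp only [ContinuousLinearMap.add_apply, ContinuousLinearMap.smul_apply,
    ContinuousLinearMap.id_apply, CJ_apply, smul_eq_mul, map_one, Complex.conj_I]
  linear_combination (Tf b z - Sf (shift2 b) z) / 2 * Complex.I_mul_I

lemma isOpen_annulus (a b : ℝ) : IsOpen {z : ℂ | a < ‖z‖ ∧ ‖z‖ < b} := by
  have : {z : ℂ | a < ‖z‖ ∧ ‖z‖ < b} = {z : ℂ | a < ‖z‖} ∩ {z : ℂ | ‖z‖ < b} := rfl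
  rw [this]
  exact (isOpen_lt continuous_const continuous_norm).inter
    (isOpen_lt continuous_norm continuous_const)

lemma isPreconnected_annulus {a b : ℝ} (ha : 0 ≤ a) :
    IsPreconnected {z : ℂ | a < ‖z‖ ∧ ‖z‖ < b} := by
  have himg : {z : ℂ | a < ‖z‖ ∧ ‖z‖ < b}
      = (fun p : ℝ × ℝ => (p.1 : ℂ) * Complex.exp ((p.2 : ℂ) * Complex.I)) ''
        (Ioo a b ×ˢ (univ : Set ℝ)) := by
    ext z
    constructor
    · rintro ⟨h1, h2⟩
      refine ⟨(‖z‖, Complex.arg z), ⟨⟨h1, h2⟩, mem_univ _⟩, ?_⟩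
      simpa using Complex.norm_mul_exp_arg_mul_I z
    · rintro ⟨⟨ρ, θ⟩, ⟨⟨h1, h2⟩, -⟩, rfl⟩
      have hρ : 0 < ρ := lt_of_le_of_lt ha h1
      have hn : ‖(ρ:ℂ) * Complex.exp ((θ:ℂ) * Complex.I)‖ = ρ := by
        rw [norm_mul, Complex.norm_real, Real.norm_eq_abs,
          Complex.norm_exp_ofReal_mul_I, _root_.abs_of_pos hρ, mul_one]
      simp only [mem_setOf_eq]
      rw [hn]
      exact ⟨h1, h2⟩
  rw [himg]
  apply IsPreconnected.image (isPreconnected_Ioo.prod isPreconnected_univ)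
  apply Continuous.continuousOn
  exact (Complex.continuous_ofReal.comp continuous_fst).mul
    (Complex.continuous_exp.comp ((Complex.continuous_ofReal.comp continuous_snd).mul
      continuous_const))

lemma conj_eq_on_circle {ρ : ℝ} {z : ℂ} (hz : ‖z‖ = ρ) (h0 : z ≠ 0) :
    starRingEnd ℂ z = (ρ:ℂ)^2 * z⁻¹ := by
  have h := Complex.mul_conj z
  have hsq : (Complex.normSq z : ℂ) = ((ρ:ℝ)^2 : ℝ) := by
    rw [Complex.normSq_eq_norm_sq, hz]
  field_simp
  rw [mul_comm] at h
  rw [h, hsq]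
  norm_cast

/-- Core vanishing lemma: a function of the form `∑ₖ eₖ(z) z̄^(k+1)` that is holomorphic
on a punctured disc must vanish there. -/
lemma key_vanish {s₀ : ℝ} (hs₀ : 0 < s₀) (F : ℂ → ℂ) (e : ℕ → ℂ → ℂ) (u : ℕ → ℝ)
    (hu0 : ∀ k, 0 ≤ u k) (hu : Summable (fun k => u k * s₀ ^ k))
    (he : ∀ k, DifferentiableOn ℂ (e k) (Metric.ball (0:ℂ) s₀))
    (hbd : ∀ (k : ℕ) (z : ℂ), ‖z‖ < s₀ → ‖e k z‖ ≤ u k)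
    (hF : DifferentiableOn ℂ F (Metric.ball (0:ℂ) s₀ \ {0}))
    (hFe : ∀ z : ℂ, ‖z‖ < s₀ → z ≠ 0 → F z = ∑' k, e k z * (starRingEnd ℂ z) ^ (k+1)) :
    ∀ z : ℂ, ‖z‖ < s₀ → z ≠ 0 → F z = 0 := by
  classical
  set U : ℝ := ∑' k, u k * s₀ ^ k with hUdef
  have hU0 : 0 ≤ U := tsum_nonneg (fun k => mul_nonneg (hu0 k) (by positivity))
  -- the comparison function G
  set G : ℝ → ℂ → ℂ := fun ρ z => ∑' k, e k z * (((ρ:ℂ))^2 * z⁻¹) ^ (k+1) with hGdef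
  -- pointwise term bounds on the annulus
  have hpt2 : ∀ (ρ : ℝ) (k : ℕ) (z : ℂ), 0 < ρ → ρ^2/s₀ < ‖z‖ → ‖z‖ < s₀ →
      ‖e k z * (((ρ:ℂ))^2 * z⁻¹) ^ (k+1)‖ ≤ (ρ^2/‖z‖) * (u k * s₀ ^ k) := by
    intro ρ k z hρ h1 h2
    have hz0 : 0 < ‖z‖ := lt_trans (by positivity) h1
    have hfrac : 0 ≤ ρ^2/‖z‖ := by positivity
    have hfs : ρ^2/‖z‖ ≤ s₀ := by
      rw [div_le_iff₀ hz0]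
      calc ρ^2 = (ρ^2/s₀) * s₀ := by field_simp
        _ ≤ ‖z‖ * s₀ := mul_le_mul_of_nonneg_right h1.le hs₀.le
        _ = s₀ * ‖z‖ := by ring
    have hnormpow : ‖(((ρ:ℂ))^2 * z⁻¹) ^ (k+1)‖ = (ρ^2/‖z‖) ^ (k+1) := by
      rw [norm_pow, norm_mul, norm_inv, norm_pow, Complex.norm_real,
        Real.norm_eq_abs, _root_.abs_of_pos hρ, div_eq_mul_inv]
    rw [norm_mul, hnormpow]
    calc ‖e k z‖ * (ρ^2/‖z‖) ^ (k+1) ≤ u k * (ρ^2/‖z‖) ^ (k+1) :=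
          mul_le_mul_of_nonneg_right (hbd k z h2) (by positivity)
      _ = u k * ((ρ^2/‖z‖) * (ρ^2/‖z‖)^k) := by rw [pow_succ]; ring
      _ ≤ u k * ((ρ^2/‖z‖) * s₀^k) := by
          apply mul_le_mul_of_nonneg_left _ (hu0 k)
          exact mul_le_mul_of_nonneg_left (pow_le_pow_left₀ hfrac hfs k) hfrac
      _ = (ρ^2/‖z‖) * (u k * s₀ ^ k) := by ring
  have hpt1 : ∀ (ρ : ℝ) (k : ℕ) (z : ℂ), 0 < ρ → ρ^2/s₀ < ‖z‖ → ‖z‖ < s₀ →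
      ‖e k z * (((ρ:ℂ))^2 * z⁻¹) ^ (k+1)‖ ≤ s₀ * (u k * s₀ ^ k) := by
    intro ρ k z hρ h1 h2
    have hz0 : 0 < ‖z‖ := lt_trans (by positivity) h1
    have hfs : ρ^2/‖z‖ ≤ s₀ := by
      rw [div_le_iff₀ hz0]
      calc ρ^2 = (ρ^2/s₀) * s₀ := by field_simp
        _ ≤ ‖z‖ * s₀ := mul_le_mul_of_nonneg_right h1.le hs₀.le
        _ = s₀ * ‖z‖ := by ring
    refine (hpt2 ρ k z hρ h1 h2).trans ?_
    exact mul_le_mul_of_nonneg_right hfs (mul_nonneg (hu0 k) (by positivity))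
  -- F agrees with G ρ on the annulus
  have hEq : ∀ ρ : ℝ, 0 < ρ → ρ < s₀ →
      EqOn F (G ρ) {z : ℂ | ρ^2/s₀ < ‖z‖ ∧ ‖z‖ < s₀} := by
    intro ρ hρ hρs
    set A := {z : ℂ | ρ^2/s₀ < ‖z‖ ∧ ‖z‖ < s₀} with hA
    have hopen : IsOpen A := isOpen_annulus _ _
    have hsub : A ⊆ Metric.ball (0:ℂ) s₀ \ {0} := by
      intro w hw
      obtain ⟨h1, h2⟩ := hw
      refine ⟨mem_ball_zero_iff.mpr h2, ?_⟩
      simp only [mem_singleton_iff]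
      intro h0
      rw [h0] at h1
      simp only [norm_zero] at h1
      have : (0:ℝ) ≤ ρ^2/s₀ := by positivity
      linarith
    have hGdiff : DifferentiableOn ℂ (G ρ) A := by
      apply differentiableOn_tsum_of_summable_norm ((hu.mul_left s₀))
      · intro k
        apply DifferentiableOn.mul ((he k).mono (fun w hw => mem_ball_zero_iff.mpr hw.2))
        apply DifferentiableOn.pow
        apply DifferentiableOn.const_mul
        apply DifferentiableOn.mono (differentiableOn_inv)
        intro w hw
        have := hsub hw
        simpa using this.2
      · exact hopen
      · intro k w hw
        exact hpt1 ρ k w hρ hw.1 hw.2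
    have hFdiff : DifferentiableOn ℂ F A := hF.mono hsub
    have hFa : AnalyticOnNhd ℂ F A := hFdiff.analyticOnNhd hopen
    have hGa : AnalyticOnNhd ℂ (G ρ) A := hGdiff.analyticOnNhd hopen
    have hρ0 : (0:ℝ) ≤ ρ^2/s₀ := by positivity
    have hρA : (ρ:ℂ) ∈ A := by
      constructor
      · simp only [Complex.norm_real, Real.norm_eq_abs, _root_.abs_of_pos hρ]
        rw [div_lt_iff₀ hs₀]
        nlinarith
      · simp only [Complex.norm_real, Real.norm_eq_abs, _root_.abs_of_pos hρ]
        exact hρs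
    -- the sequence on the circle
    have hfreq : ∃ᶠ z in nhdsWithin (ρ:ℂ) {(ρ:ℂ)}ᶜ, F z = G ρ z := by
      set zs : ℕ → ℂ := fun m => (ρ:ℂ) * Complex.exp (((1/((m:ℝ)+1) : ℝ) : ℂ) * Complex.I)
        with hzs
      have hnorm : ∀ m, ‖zs m‖ = ρ := by
        intro m
        rw [hzs]
        simp only [norm_mul, Complex.norm_real, Real.norm_eq_abs,
          Complex.norm_exp_ofReal_mul_I, _root_.abs_of_pos hρ, mul_one]
      have hne : ∀ m, zs m ≠ (ρ:ℂ) := by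
        intro m h
        have hρne : (ρ:ℂ) ≠ 0 := by
          simp only [ne_eq, Complex.ofReal_eq_zero]
          exact hρ.ne'
        have hexp : Complex.exp (((1/((m:ℝ)+1) : ℝ) : ℂ) * Complex.I) = 1 := by
          have h2 := h
          rw [hzs] at h2
          simp only at h2
          have h3 := mul_left_cancel₀ hρne (h2.trans (mul_one (ρ:ℂ)).symm)
          exact h3
        rw [Complex.exp_eq_one_iff] at hexp
        obtain ⟨nn, hnn⟩ := hexp
        have him := congrArg Complex.im hnn
        simp only [Complex.mul_im, Complex.mul_re, Complex.ofReal_re, Complex.I_im,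
          Complex.ofReal_im, Complex.I_re, Complex.intCast_re, Complex.intCast_im,
          Complex.ofReal_intCast, mul_zero, mul_one, zero_mul, add_zero, zero_add,
          sub_zero, mul_im, mul_re, Complex.re_ofNat, Complex.im_ofNat] at him
        -- him : 1/((m:ℝ)+1) = nn * (2 * π)
        have hm0 : (0:ℝ) < 1/((m:ℝ)+1) := by positivity
        have hm1 : 1/((m:ℝ)+1) ≤ 1 := by
          rw [div_le_one (by positivity)]
          linarith [Nat.cast_nonneg (α := ℝ) m]
        have hπ := Real.pi_gt_three
        rcases le_or_gt (nn : ℝ) 0 with hn | hn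
        · nlinarith [him, Real.pi_pos, hm0]
        · have h5 : (1:ℝ) ≤ (nn:ℝ) := by exact_mod_cast hn
          nlinarith [him, hm1, h5]
      have htends : Tendsto zs atTop (nhdsWithin (ρ:ℂ) {(ρ:ℂ)}ᶜ) := by
        apply tendsto_nhdsWithin_of_tendsto_nhds_of_eventually_within
        · rw [hzs]
          have h1 : Tendsto (fun m : ℕ => (1/((m:ℝ)+1) : ℝ)) atTop (𝓝 0) :=
            tendsto_one_div_add_atTop_nhds_zero_nat
          have h2 : Tendsto (fun m : ℕ => ((1/((m:ℝ)+1) : ℝ) : ℂ) * Complex.I) atTop (𝓝 0) := by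
            have := ((Complex.continuous_ofReal.tendsto 0).comp h1)
            have h3 := this.mul_const Complex.I
            simpa using h3
          have h4 := (Complex.continuous_exp.tendsto 0).comp h2
          rw [Complex.exp_zero] at h4
          have h5 := h4.const_mul (ρ:ℂ)
          simpa using h5
        · exact Eventually.of_forall (fun m => hne m)
      apply htends.frequently
      apply Frequently.of_forall
      intro m
      have hzm0 : zs m ≠ 0 := by
        intro h
        have := hnorm m
        rw [h] at this
        simp at this
        exact hρ.ne' this.symm
      have hzms : ‖zs m‖ < s₀ := by rw [hnorm m]; exact hρs
      rw [hFe (zs m) hzms hzm0, hGdef]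
      apply tsum_congr
      intro k
      rw [conj_eq_on_circle (hnorm m) hzm0]
    exact hFa.eqOn_of_preconnected_of_frequently_eq hGa (isPreconnected_annulus hρ0) hρA hfreq
  -- now conclude at a fixed point
  intro z₀ hz₀s hz₀0
  have hz₀ : 0 < ‖z₀‖ := norm_pos_iff.mpr hz₀0
  set ρ₀ : ℝ := min (‖z₀‖/2) (s₀/2) with hρ₀def
  have hρ₀pos : 0 < ρ₀ := lt_min (by positivity) (by positivity)
  have hbound : ∀ m : ℕ, ‖F z₀‖ ≤ (U/‖z₀‖ * ρ₀^2) * (1/((m:ℝ)+1))^2 := by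
    intro m
    set ρ : ℝ := ρ₀ * (1/((m:ℝ)+1)) with hρdef
    have hm1 : 0 < 1/((m:ℝ)+1) := by positivity
    have hm2 : 1/((m:ℝ)+1) ≤ 1 := by
      rw [div_le_one (by positivity)]
      linarith [Nat.cast_nonneg (α := ℝ) m]
    have hρpos : 0 < ρ := by positivity
    have hρle : ρ ≤ ρ₀ := by
      calc ρ = ρ₀ * (1/((m:ℝ)+1)) := rfl
        _ ≤ ρ₀ * 1 := mul_le_mul_of_nonneg_left hm2 hρ₀pos.le
        _ = ρ₀ := mul_one _
    have hρs : ρ < s₀ := lt_of_le_of_lt (hρle.trans (min_le_right _ _)) (by linarith)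
    have hz₀A : z₀ ∈ {z : ℂ | ρ^2/s₀ < ‖z‖ ∧ ‖z‖ < s₀} := by
      constructor
      · rw [div_lt_iff₀ hs₀]
        have h1 : ρ ≤ ‖z₀‖/2 := hρle.trans (min_le_left _ _)
        have h2 : ρ ≤ s₀/2 := hρle.trans (min_le_right _ _)
        nlinarith
      · exact hz₀s
    have hFG := hEq ρ hρpos hρs hz₀A
    rw [hFG]
    -- bound ‖G ρ z₀‖
    have hsum1 : Summable (fun k => ‖e k z₀ * (((ρ:ℂ))^2 * z₀⁻¹) ^ (k+1)‖) := by
      refine Summable.of_nonneg_of_le (fun k => norm_nonneg _)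
        (fun k => hpt2 ρ k z₀ hρpos hz₀A.1 hz₀A.2) ?_
      exact hu.mul_left _
    have h1 : ‖G ρ z₀‖ ≤ ∑' k, ‖e k z₀ * (((ρ:ℂ))^2 * z₀⁻¹) ^ (k+1)‖ :=
      norm_tsum_le_tsum_norm hsum1
    have h2 : (∑' k, ‖e k z₀ * (((ρ:ℂ))^2 * z₀⁻¹) ^ (k+1)‖)
        ≤ ∑' k, (ρ^2/‖z₀‖) * (u k * s₀ ^ k) :=
      Summable.tsum_le_tsum (fun k => hpt2 ρ k z₀ hρpos hz₀A.1 hz₀A.2) hsum1 (hu.mul_left _)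
    have h3 : (∑' k, (ρ^2/‖z₀‖) * (u k * s₀ ^ k)) = (ρ^2/‖z₀‖) * U := by
      rw [tsum_mul_left]
    have h4 : (ρ^2/‖z₀‖) * U = (U/‖z₀‖ * ρ₀^2) * (1/((m:ℝ)+1))^2 := by
      rw [hρdef]
      field_simp
    calc ‖G ρ z₀‖ ≤ ∑' k, ‖e k z₀ * (((ρ:ℂ))^2 * z₀⁻¹) ^ (k+1)‖ := h1
      _ ≤ ∑' k, (ρ^2/‖z₀‖) * (u k * s₀ ^ k) := h2
      _ = (ρ^2/‖z₀‖) * U := h3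
      _ = (U/‖z₀‖ * ρ₀^2) * (1/((m:ℝ)+1))^2 := h4
  have htend : Tendsto (fun m : ℕ => (U/‖z₀‖ * ρ₀^2) * (1/((m:ℝ)+1))^2) atTop (𝓝 0) := by
    have h1 : Tendsto (fun m : ℕ => (1/((m:ℝ)+1) : ℝ)) atTop (𝓝 0) :=
      tendsto_one_div_add_atTop_nhds_zero_nat
    have h2 := (h1.pow 2).const_mul (U/‖z₀‖ * ρ₀^2)
    simpa using h2
  have hle : ‖F z₀‖ ≤ 0 := ge_of_tendsto' htend hbound
  have := norm_nonneg (F z₀)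
  have hnorm0 : ‖F z₀‖ = 0 := le_antisymm hle this
  exact norm_eq_zero.mp hnorm0

lemma wderiv_congr_ev {f g : ℂ → ℂ} {z : ℂ} (h : f =ᶠ[𝓝 z] g) : wderiv f z = wderiv g z := by
  unfold wderiv
  rw [h.fderiv_eq]

lemma diffAt_of_wbar_zero {f : ℂ → ℂ} {z : ℂ} (hf : DifferentiableAt ℝ f z)
    (h0 : wbarderiv f z = 0) : DifferentiableAt ℂ f z := by
  set D := fderiv ℝ f z with hD
  have h1 : D 1 + Complex.I * D Complex.I = 0 := by
    unfold wbarderiv at h0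
    rw [← hD] at h0
    linear_combination 2 * h0
  have hI : D Complex.I = Complex.I * D 1 := by
    linear_combination (-Complex.I) * h1 + (D Complex.I) * Complex.I_mul_I
  set C : ℂ →L[ℂ] ℂ := (ContinuousLinearMap.id ℂ ℂ).smulRight (D 1) with hC
  have hCD : (C.restrictScalars ℝ : ℂ →L[ℝ] ℂ) = D := by
    apply ContinuousLinearMap.ext
    intro v
    have hv : (v : ℂ) = (v.re : ℝ) • (1:ℂ) + (v.im : ℝ) • Complex.I := by
      simp only [Complex.real_smul, smul_eq_mul, Complex.ofReal_re, mul_one]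
      exact (Complex.re_add_im v).symm
    have hrhs : D v = (v.re : ℝ) • D 1 + (v.im : ℝ) • D Complex.I := by
      conv_lhs => rw [hv]
      rw [map_add, map_smul, map_smul]
    have hlhs : (C.restrictScalars ℝ) v = v * D 1 := by
      simp [hC, smul_eq_mul]
    rw [hlhs, hrhs, hI]
    simp only [Complex.real_smul, smul_eq_mul]
    linear_combination (-(D 1)) * (Complex.re_add_im v)
  have : HasFDerivAt f C z := hasFDerivAt_of_restrictScalars ℝ hf.hasFDerivAt hCD
  exact this.differentiableAt

/-- diagonal coefficients of the square of an `Sf`-type series. -/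
noncomputable def sqf (b : ℕ → ℕ → ℂ) (k : ℕ) (z : ℂ) : ℂ :=
  if k = 0 then 0 else ∑ p ∈ Finset.HasAntidiagonal.antidiagonal (k-1), cf b p.1 z * cf b p.2 z

lemma sqf_bound {b : ℕ → ℕ → ℂ} {r : ℝ} (hb : Good₂ b r) {s t : ℝ}
    (hs0 : 0 ≤ s) (hst : s < t) (htr : t < r) :
    ∃ C, 0 ≤ C ∧ ∀ (k : ℕ) (z : ℂ), ‖z‖ ≤ s →
      ‖sqf b k z‖ ≤ C * (((k:ℝ)+1) * t⁻¹ ^ k) := by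
  have ht0 : 0 < t := lt_of_le_of_lt hs0 hst
  obtain ⟨C, hC0, hC⟩ := cf_bound hb hs0 hst htr
  refine ⟨C^2 * t, by positivity, fun k z hz => ?_⟩
  match k with
  | 0 => simp [sqf]; positivity
  | (m+1) =>
    simp only [sqf, if_neg (Nat.succ_ne_zero m), Nat.add_sub_cancel]
    push_cast
    have hcard : (Finset.HasAntidiagonal.antidiagonal m).card = m + 1 := Finset.Nat.card_antidiagonal m
    have hterm : ∀ p ∈ Finset.HasAntidiagonal.antidiagonal m,
        ‖cf b p.1 z * cf b p.2 z‖ ≤ C^2 * t⁻¹ ^ m := by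
      intro p hp
      have hpm := Finset.HasAntidiagonal.mem_antidiagonal.mp hp
      rw [norm_mul]
      calc ‖cf b p.1 z‖ * ‖cf b p.2 z‖ ≤ (C * t⁻¹ ^ p.1) * (C * t⁻¹ ^ p.2) := by
            apply mul_le_mul (hC p.1 z hz) (hC p.2 z hz) (norm_nonneg _) (by positivity)
        _ = C^2 * t⁻¹ ^ (p.1 + p.2) := by rw [pow_add]; ring
        _ = C^2 * t⁻¹ ^ m := by rw [hpm]
    calc ‖∑ p ∈ Finset.HasAntidiagonal.antidiagonal m, cf b p.1 z * cf b p.2 z‖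
        ≤ ∑ p ∈ Finset.HasAntidiagonal.antidiagonal m, ‖cf b p.1 z * cf b p.2 z‖ := norm_sum_le _ _
      _ ≤ ∑ _p ∈ Finset.HasAntidiagonal.antidiagonal m, C^2 * t⁻¹ ^ m :=
          Finset.sum_le_sum hterm
      _ = ((m:ℝ) + 1) * (C^2 * t⁻¹ ^ m) := by
          rw [Finset.sum_const, hcard, nsmul_eq_mul]
          push_cast
          ring
      _ ≤ (C^2 * t) * (((m:ℝ)+1+1) * t⁻¹ ^ (m+1)) := by
          have : t * t⁻¹ ^ (m+1) = t⁻¹ ^ m := by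
            rw [pow_succ]
            field_simp
          have hre : (C^2 * t) * (((m:ℝ)+1+1) * t⁻¹ ^ (m+1))
              = C^2 * (((m:ℝ)+2) * (t * t⁻¹ ^ (m+1))) := by ring
          rw [hre, this]
          have h1 : ((m:ℝ)+1) * (C^2 * t⁻¹ ^ m) = C^2 * (((m:ℝ)+1) * t⁻¹ ^ m) := by ring
          rw [h1]
          apply mul_le_mul_of_nonneg_left _ (by positivity)
          apply mul_le_mul_of_nonneg_right _ (by positivity)
          linarith
    -- note: goal cast `((m+1:ℕ):ℝ)+1 = (m:ℝ)+1+1` handled by push_cast below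

lemma sqf_summable {b : ℕ → ℕ → ℂ} {r : ℝ} (hb : Good₂ b r) {z : ℂ} (hz : ‖z‖ < r) :
    Summable (fun k => sqf b k z * (starRingEnd ℂ z) ^ (k+1)) := by
  set t := (‖z‖ + r) / 2 with htdef
  have h0 : 0 ≤ ‖z‖ := norm_nonneg z
  have hzt : ‖z‖ < t := by simp only [htdef]; linarith
  have htr : t < r := by simp only [htdef]; linarith
  have ht0 : 0 < t := lt_of_le_of_lt h0 hzt
  obtain ⟨C, hC0, hC⟩ := sqf_bound hb h0 hzt htr
  have hq0 : (0:ℝ) ≤ ‖z‖ / t := by positivity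
  have hq1 : ‖z‖ / t < 1 := (div_lt_one ht0).mpr hzt
  apply Summable.of_norm
  refine Summable.of_nonneg_of_le (fun k => norm_nonneg _) (fun k => ?_)
    (((summable_np_geo 1 hq0 hq1).mul_left (C * ‖z‖)))
  rw [norm_mul, norm_conj_pow]
  calc ‖sqf b k z‖ * ‖z‖ ^ (k+1) ≤ (C * (((k:ℝ)+1) * t⁻¹ ^ k)) * ‖z‖ ^ (k+1) :=
        mul_le_mul_of_nonneg_right (hC k z le_rfl) (by positivity)
    _ = (C * ‖z‖) * (((k:ℝ)+1)^1 * (‖z‖/t) ^ k) := by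
        rw [div_pow, inv_pow, pow_succ, pow_one]
        field_simp

/-- Cauchy product: the square of `Sf b` is again of the same antiholomorphic form. -/
lemma Sf_sq {b : ℕ → ℕ → ℂ} {r : ℝ} (hb : Good₂ b r) {z : ℂ} (hz : ‖z‖ < r) :
    (Sf b z)^2 = ∑' k : ℕ, sqf b k z * (starRingEnd ℂ z) ^ (k+1) := by
  have hns := Sf_summable_norm hb hz
  have hcauchy := tsum_mul_tsum_eq_tsum_sum_antidiagonal_of_summable_norm
    (f := fun k => cf b k z * (starRingEnd ℂ z) ^ (k+1))
    (g := fun k => cf b k z * (starRingEnd ℂ z) ^ (k+1)) hns hns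
  have hsq : (Sf b z)^2 = Sf b z * Sf b z := sq (Sf b z) ▸ rfl
  rw [pow_two]
  unfold Sf
  rw [hcauchy]
  have hstep1 : ∀ n : ℕ, (∑ p ∈ Finset.HasAntidiagonal.antidiagonal n,
      (cf b p.1 z * (starRingEnd ℂ z) ^ (p.1+1)) * (cf b p.2 z * (starRingEnd ℂ z) ^ (p.2+1)))
      = (∑ p ∈ Finset.HasAntidiagonal.antidiagonal n, cf b p.1 z * cf b p.2 z) * (starRingEnd ℂ z) ^ (n+2) := by
    intro n
    rw [Finset.sum_mul]
    apply Finset.sum_congr rfl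
    intro p hp
    have hpn := Finset.HasAntidiagonal.mem_antidiagonal.mp hp
    have hpow : (starRingEnd ℂ z) ^ (p.1+1) * (starRingEnd ℂ z) ^ (p.2+1)
        = (starRingEnd ℂ z) ^ (n+2) := by
      rw [← pow_add]
      congr 1
      omega
    calc (cf b p.1 z * (starRingEnd ℂ z) ^ (p.1+1)) * (cf b p.2 z * (starRingEnd ℂ z) ^ (p.2+1))
        = (cf b p.1 z * cf b p.2 z) * ((starRingEnd ℂ z) ^ (p.1+1) * (starRingEnd ℂ z) ^ (p.2+1)) := by
          ring
      _ = (cf b p.1 z * cf b p.2 z) * (starRingEnd ℂ z) ^ (n+2) := by rw [hpow]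
  rw [tsum_congr hstep1]
  -- now reindex the RHS
  have hsum := sqf_summable hb hz
  rw [Summable.tsum_eq_zero_add hsum]
  have h0 : sqf b 0 z = 0 := by simp [sqf]
  rw [h0, zero_mul, zero_add]
  apply tsum_congr
  intro k
  have hk : sqf b (k+1) z = ∑ p ∈ Finset.HasAntidiagonal.antidiagonal k, cf b p.1 z * cf b p.2 z := by
    simp [sqf]
  rw [hk]

end AHPV

set_option maxHeartbeats 2000000 in
open AHPV in
/-- Let `ν(z,z̄) = Σ a_{jk} z^j z̄^k` be real analytic near `0`, split as `ν = g + Λ` with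
`g(z) = Σ_j a_{j0} z^j` and `Λ` the part involving `z̄`.  Put
`H = Λ_zz - (n/z)Λ_z - 2g'Λ_z - (Λ_z)²`.  If `z²H` is holomorphic in `z` (its `∂/∂z̄`
vanishes) on a punctured neighborhood of `0`, then `H ≡ 0` there. -/
theorem antiholomorphic_part_vanishes
    (n : ℕ) (a : ℕ → ℕ → ℂ) (r : ℝ) (hr : 0 < r)
    (hsum : Summable (fun p : ℕ × ℕ => ‖a p.1 p.2‖ * r ^ (p.1 + p.2)))
    (g Λ H : ℂ → ℂ)
    (hgdef : ∀ z, g z = ∑' j : ℕ, a j 0 * z ^ j)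
    (hΛdef : ∀ z, Λ z = ∑' k : ℕ, (∑' j : ℕ, a j (k + 1) * z ^ j) *
      ((starRingEnd ℂ) z) ^ (k + 1))
    (hHdef : ∀ z, H z = wderiv (fun w => wderiv Λ w) z
      - ((n : ℂ) / z) * wderiv Λ z - 2 * deriv g z * wderiv Λ z - (wderiv Λ z)^2)
    (hhol : ∀ z ∈ Metric.ball (0:ℂ) r, z ≠ 0 →
      wbarderiv (fun w => w^2 * H w) z = 0) :
    ∀ z ∈ Metric.ball (0:ℂ) r, z ≠ 0 → H z = 0 := by
  classical
  -- the coefficient families are `Good`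
  have hga : Good₂ a r := by
    intro s hs hsr
    set T := ∑' p : ℕ × ℕ, ‖a p.1 p.2‖ * r ^ (p.1 + p.2) with hT
    have hT0 : 0 ≤ T := tsum_nonneg fun p => by positivity
    refine ⟨T, hT0, fun j k => ?_⟩
    have hle : ‖a j k‖ * r ^ (j + k) ≤ T :=
      Summable.le_tsum hsum (j, k) fun p _ => by positivity
    have hrp : (0:ℝ) < r ^ (j+k) := by positivity
    have h1 : ‖a j k‖ ≤ T * r⁻¹ ^ (j+k) := by
      rw [inv_pow]
      rw [mul_comm] at hle
      calc ‖a j k‖ = (r ^ (j+k) * ‖a j k‖) * (r ^ (j+k))⁻¹ := by field_simp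
        _ ≤ T * (r ^ (j+k))⁻¹ := mul_le_mul_of_nonneg_right hle (by positivity)
    have hinv : r⁻¹ ≤ s⁻¹ := by
      apply inv_anti₀ hs hsr.le
    calc ‖a j k‖ ≤ T * r⁻¹ ^ (j+k) := h1
      _ ≤ T * (s⁻¹ ^ j * s⁻¹ ^ k) := by
          rw [pow_add]
          apply mul_le_mul_of_nonneg_left _ hT0
          exact mul_le_mul (pow_le_pow_left₀ (by positivity) hinv j)
            (pow_le_pow_left₀ (by positivity) hinv k) (by positivity) (by positivity)
      _ = T * s⁻¹ ^ j * s⁻¹ ^ k := by ring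
  set b : ℕ → ℕ → ℂ := fun j k => a j (k+1) with hbdef
  set α : ℕ → ℂ := fun j => a j 0 with hαdef
  have hgb : Good₂ b r := by
    intro s hs hsr
    obtain ⟨B, hB0, hB⟩ := hga s hs hsr
    refine ⟨B * s⁻¹, by positivity, fun j k => ?_⟩
    calc ‖b j k‖ = ‖a j (k+1)‖ := rfl
      _ ≤ B * s⁻¹ ^ j * s⁻¹ ^ (k+1) := hB j (k+1)
      _ = (B * s⁻¹) * s⁻¹ ^ j * s⁻¹ ^ k := by rw [pow_succ]; ring
  have hgα : Good α r := good₂_col hga 0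
  have hΛeq : Λ = Sf b := by
    funext w
    rw [hΛdef w]
    rfl
  have hgeq : g = psum α := by
    funext w
    rw [hgdef w]
    rfl
  set b1 := shift2 b with hb1def
  set b2 := shift2 b1 with hb2def
  have hgb1 : Good₂ b1 r := good₂_shift2 hgb
  have hgb2 : Good₂ b2 r := good₂_shift2 hgb1
  set α1 := shift α with hα1def
  have hgα1 : Good α1 r := good_shift' hgα
  -- identify the Wirtinger derivatives on the ball
  have hwΛ : ∀ w : ℂ, ‖w‖ < r → wderiv Λ w = Sf b1 w := by
    intro w hw
    rw [hΛeq]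
    exact Sf_wderiv hgb hw
  have hwwΛ : ∀ w : ℂ, ‖w‖ < r → wderiv (fun x => wderiv Λ x) w = Sf b2 w := by
    intro w hw
    have hball : Metric.ball (0:ℂ) r ∈ 𝓝 w :=
      Metric.isOpen_ball.mem_nhds (mem_ball_zero_iff.mpr hw)
    have hev : (fun x => wderiv Λ x) =ᶠ[𝓝 w] Sf b1 := by
      filter_upwards [hball] with x hx
      exact hwΛ x (mem_ball_zero_iff.mp hx)
    rw [wderiv_congr_ev hev]
    exact Sf_wderiv hgb1 hw
  have hderg : ∀ w : ℂ, ‖w‖ < r → deriv g w = psum α1 w := by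
    intro w hw
    rw [hgeq]
    exact (psum_hasDerivAt hgα hw).deriv
  have hHw : ∀ w : ℂ, ‖w‖ < r → H w
      = Sf b2 w - ((n:ℂ)/w) * Sf b1 w - 2 * psum α1 w * Sf b1 w - (Sf b1 w)^2 := by
    intro w hw
    rw [hHdef w, hwΛ w hw, hwwΛ w hw, hderg w hw]
  set F : ℂ → ℂ := fun w => w^2 * H w with hFdef
  have hHdiff : ∀ w : ℂ, ‖w‖ < r → w ≠ 0 → DifferentiableAt ℝ H w := by
    intro w hw hw0
    have hopen : IsOpen (Metric.ball (0:ℂ) r \ {0}) :=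
      Metric.isOpen_ball.sdiff isClosed_singleton
    have hmem : w ∈ Metric.ball (0:ℂ) r \ {0} := ⟨mem_ball_zero_iff.mpr hw, hw0⟩
    have hev : H =ᶠ[𝓝 w] (fun x => Sf b2 x - ((n:ℂ)/x) * Sf b1 x
        - 2 * psum α1 x * Sf b1 x - (Sf b1 x)^2) := by
      filter_upwards [hopen.mem_nhds hmem] with x hx
      exact hHw x (mem_ball_zero_iff.mp hx.1)
    rw [hev.differentiableAt_iff]
    have h1 : DifferentiableAt ℝ (Sf b2) w := (Sf_hasFDerivAt hgb2 hw).differentiableAt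
    have h2 : DifferentiableAt ℝ (Sf b1) w := (Sf_hasFDerivAt hgb1 hw).differentiableAt
    have h3 : DifferentiableAt ℝ (fun x : ℂ => (n:ℂ)/x) w :=
      ((differentiableAt_const _).div differentiableAt_id hw0).restrictScalars ℝ
    have h4 : DifferentiableAt ℝ (psum α1) w :=
      ((psum_hasDerivAt hgα1 hw).differentiableAt).restrictScalars ℝ
    exact ((h1.sub (h3.mul h2)).sub
      (((differentiableAt_const _).mul h4).mul h2)).sub (h2.pow 2)
  have hFdiffC : ∀ w : ℂ, ‖w‖ < r → w ≠ 0 → DifferentiableAt ℂ F w := by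
    intro w hw hw0
    apply diffAt_of_wbar_zero
    · exact ((differentiableAt_pow 2 : DifferentiableAt ℂ (fun x : ℂ => x^2) w).restrictScalars ℝ).mul (hHdiff w hw hw0)
    · exact hhol w (mem_ball_zero_iff.mpr hw) hw0
  -- the expansion of F
  set e : ℕ → ℂ → ℂ := fun k w => w^2 * cf b2 k w - (n:ℂ) * w * cf b1 k w
      - (2 * psum α1 w * w^2) * cf b1 k w - w^2 * sqf b1 k w with hedef
  have hFe : ∀ w : ℂ, ‖w‖ < r → w ≠ 0 →
      F w = ∑' k, e k w * (starRingEnd ℂ w)^(k+1) := by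
    intro w hw hw0
    have hsm1 : Summable (fun k => cf b1 k w * (starRingEnd ℂ w)^(k+1)) := Sf_summable hgb1 hw
    have hsm2 : Summable (fun k => cf b2 k w * (starRingEnd ℂ w)^(k+1)) := Sf_summable hgb2 hw
    have hsm4 : Summable (fun k => sqf b1 k w * (starRingEnd ℂ w)^(k+1)) := sqf_summable hgb1 hw
    have hkey : F w = (w^2 * Sf b2 w) - ((n:ℂ)*w * Sf b1 w)
        - ((2 * psum α1 w * w^2) * Sf b1 w) - (w^2 * (Sf b1 w)^2) := by
      have h5 : F w = w^2 * H w := rfl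
      rw [h5, hHw w hw]
      have h6 : w^2 * (((n:ℂ)/w) * Sf b1 w) = (n:ℂ)*w * Sf b1 w := by
        field_simp
      field_simp
    have e1 : w^2 * Sf b2 w = ∑' k, (w^2 * cf b2 k w) * (starRingEnd ℂ w)^(k+1) := by
      unfold Sf
      rw [← tsum_mul_left]
      exact tsum_congr fun k => by ring
    have e2 : (n:ℂ)*w * Sf b1 w
        = ∑' k, ((n:ℂ)*w * cf b1 k w) * (starRingEnd ℂ w)^(k+1) := by
      unfold Sf
      rw [← tsum_mul_left]
      exact tsum_congr fun k => by ring
    have e3 : (2 * psum α1 w * w^2) * Sf b1 w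
        = ∑' k, ((2 * psum α1 w * w^2) * cf b1 k w) * (starRingEnd ℂ w)^(k+1) := by
      unfold Sf
      rw [← tsum_mul_left]
      exact tsum_congr fun k => by ring
    have e4 : w^2 * (Sf b1 w)^2 = ∑' k, (w^2 * sqf b1 k w) * (starRingEnd ℂ w)^(k+1) := by
      rw [Sf_sq hgb1 hw, ← tsum_mul_left]
      exact tsum_congr fun k => by ring
    have hA : Summable (fun k => (w^2 * cf b2 k w) * (starRingEnd ℂ w)^(k+1)) :=
      (hsm2.mul_left (w^2)).congr fun k => by ring
    have hB : Summable (fun k => ((n:ℂ)*w * cf b1 k w) * (starRingEnd ℂ w)^(k+1)) :=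
      (hsm1.mul_left ((n:ℂ)*w)).congr fun k => by ring
    have hC : Summable (fun k => ((2 * psum α1 w * w^2) * cf b1 k w)
        * (starRingEnd ℂ w)^(k+1)) :=
      (hsm1.mul_left (2 * psum α1 w * w^2)).congr fun k => by ring
    have hD : Summable (fun k => (w^2 * sqf b1 k w) * (starRingEnd ℂ w)^(k+1)) :=
      (hsm4.mul_left (w^2)).congr fun k => by ring
    rw [hkey, e1, e2, e3, e4, ← Summable.tsum_sub hA hB, ← Summable.tsum_sub (hA.sub hB) hC,
      ← Summable.tsum_sub ((hA.sub hB).sub hC) hD]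
    exact tsum_congr fun k => by simp only [hedef]; ring
  -- bounds for key_vanish on the half-ball
  have hs₀pos : 0 < r/2 := by linarith
  have hstt : r/2 < 3*r/4 := by linarith
  have httr : 3*r/4 < r := by linarith
  have htt0 : 0 < 3*r/4 := by linarith
  obtain ⟨C2, hC20, hC2⟩ := cf_bound hgb2 hs₀pos.le hstt httr
  obtain ⟨C1, hC10, hC1⟩ := cf_bound hgb1 hs₀pos.le hstt httr
  obtain ⟨CQ, hCQ0, hCQ⟩ := sqf_bound hgb1 hs₀pos.le hstt httr
  obtain ⟨Γ, hΓ0, hΓ⟩ := psum_bound hgα1 hs₀pos.le hstt httr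
  set K : ℝ := (r/2)^2*C2 + (n:ℝ)*(r/2)*C1 + 2*Γ*(r/2)^2*C1 + (r/2)^2*CQ with hKdef
  have hK0 : 0 ≤ K := by positivity
  set u : ℕ → ℝ := fun k => K * (((k:ℝ)+1) * (3*r/4)⁻¹^k) with hudef
  have hu0 : ∀ k, 0 ≤ u k := fun k => by
    simp only [hudef]
    positivity
  have hq0 : (0:ℝ) ≤ (r/2)/(3*r/4) := by positivity
  have hq1 : (r/2)/(3*r/4) < 1 := by
    rw [div_lt_one htt0]
    linarith
  have hu : Summable (fun k => u k * (r/2) ^ k) := by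
    have hs := (summable_np_geo 1 hq0 hq1).mul_left K
    apply hs.congr
    intro k
    simp only [hudef]
    rw [div_pow, inv_pow, pow_one]
    field_simp
  have he : ∀ k, DifferentiableOn ℂ (e k) (Metric.ball (0:ℂ) (r/2)) := by
    intro k w hwmem
    have hw : ‖w‖ < r := lt_trans (mem_ball_zero_iff.mp hwmem) (by linarith)
    apply DifferentiableAt.differentiableWithinAt
    have d2 : DifferentiableAt ℂ (fun x => cf b2 k x) w :=
      (cf_hasDerivAt hgb2 k hw).differentiableAt
    have d1 : DifferentiableAt ℂ (fun x => cf b1 k x) w :=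
      (cf_hasDerivAt hgb1 k hw).differentiableAt
    have dα : DifferentiableAt ℂ (psum α1) w := (psum_hasDerivAt hgα1 hw).differentiableAt
    have dq : DifferentiableAt ℂ (fun x => sqf b1 k x) w := by
      cases k with
      | zero =>
        have : (fun x : ℂ => sqf b1 0 x) = fun _ => 0 := by
          funext x
          simp [sqf]
        rw [this]
        exact differentiableAt_const 0
      | succ m =>
        have : (fun x : ℂ => sqf b1 (m+1) x)
            = fun x => ∑ p ∈ Finset.HasAntidiagonal.antidiagonal m, cf b1 p.1 x * cf b1 p.2 x := by
          funext x
          simp [sqf]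
        rw [this]
        apply DifferentiableAt.fun_sum
        intro p _
        exact ((cf_hasDerivAt hgb1 p.1 hw).differentiableAt).mul
          ((cf_hasDerivAt hgb1 p.2 hw).differentiableAt)
    simp only [hedef]
    exact (((((differentiableAt_pow 2).mul d2).sub
      (((differentiableAt_const _).mul differentiableAt_id).mul d1)).sub
      ((((differentiableAt_const _).mul dα).mul (differentiableAt_pow 2)).mul d1)).sub
      ((differentiableAt_pow 2).mul dq))
  have hbd : ∀ (k : ℕ) (w : ℂ), ‖w‖ < r/2 → ‖e k w‖ ≤ u k := by
    intro k w hw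
    have hw' : ‖w‖ ≤ r/2 := hw.le
    set X : ℝ := (3*r/4)⁻¹ ^ k with hXdef
    have hX0 : (0:ℝ) ≤ X := by positivity
    have hw2 : ‖w‖^2 ≤ (r/2)^2 := by
      apply pow_le_pow_left₀ (norm_nonneg w) hw'
    have t1 : ‖w^2 * cf b2 k w‖ ≤ ((r/2)^2*C2) * X := by
      rw [norm_mul, norm_pow]
      calc ‖w‖^2 * ‖cf b2 k w‖ ≤ (r/2)^2 * (C2 * X) :=
            mul_le_mul hw2 (hC2 k w hw') (norm_nonneg _) (by positivity)
        _ = ((r/2)^2*C2) * X := by ring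
    have t2 : ‖(n:ℂ) * w * cf b1 k w‖ ≤ ((n:ℝ)*(r/2)*C1) * X := by
      rw [norm_mul, norm_mul, Complex.norm_natCast]
      calc (n:ℝ) * ‖w‖ * ‖cf b1 k w‖ ≤ (n:ℝ) * (r/2) * (C1 * X) := by
            apply mul_le_mul (mul_le_mul_of_nonneg_left hw' (Nat.cast_nonneg n))
              (hC1 k w hw') (norm_nonneg _) (by positivity)
        _ = ((n:ℝ)*(r/2)*C1) * X := by ring
    have t3 : ‖(2 * psum α1 w * w^2) * cf b1 k w‖ ≤ (2*Γ*(r/2)^2*C1) * X := by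
      rw [norm_mul, norm_mul, norm_mul, norm_pow]
      have hn2 : ‖(2:ℂ)‖ = 2 := by norm_num
      rw [hn2]
      calc 2 * ‖psum α1 w‖ * ‖w‖^2 * ‖cf b1 k w‖
          ≤ 2 * Γ * (r/2)^2 * (C1 * X) := by
            apply mul_le_mul _ (hC1 k w hw') (norm_nonneg _) (by positivity)
            apply mul_le_mul _ hw2 (by positivity) (by positivity)
            exact mul_le_mul_of_nonneg_left (hΓ w hw') (by norm_num)
        _ = (2*Γ*(r/2)^2*C1) * X := by ring
    have t4 : ‖w^2 * sqf b1 k w‖ ≤ ((r/2)^2*CQ) * (((k:ℝ)+1) * X) := by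
      rw [norm_mul, norm_pow]
      calc ‖w‖^2 * ‖sqf b1 k w‖ ≤ (r/2)^2 * (CQ * (((k:ℝ)+1) * X)) :=
            mul_le_mul hw2 (hCQ k w hw') (norm_nonneg _) (by positivity)
        _ = ((r/2)^2*CQ) * (((k:ℝ)+1) * X) := by ring
    have hXk : X ≤ ((k:ℝ)+1) * X := by
      nlinarith [hX0, Nat.cast_nonneg (α := ℝ) k]
    have htotal : ‖e k w‖ ≤ ((r/2)^2*C2) * X + ((n:ℝ)*(r/2)*C1) * X
        + (2*Γ*(r/2)^2*C1) * X + ((r/2)^2*CQ) * (((k:ℝ)+1) * X) := by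
      simp only [hedef]
      calc ‖w^2 * cf b2 k w - (n:ℂ) * w * cf b1 k w
            - (2 * psum α1 w * w^2) * cf b1 k w - w^2 * sqf b1 k w‖
          ≤ ‖w^2 * cf b2 k w - (n:ℂ) * w * cf b1 k w
            - (2 * psum α1 w * w^2) * cf b1 k w‖ + ‖w^2 * sqf b1 k w‖ := norm_sub_le _ _
        _ ≤ (‖w^2 * cf b2 k w - (n:ℂ) * w * cf b1 k w‖
            + ‖(2 * psum α1 w * w^2) * cf b1 k w‖) + ‖w^2 * sqf b1 k w‖ := by
            apply add_le_add_left (norm_sub_le _ _)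
        _ ≤ ((‖w^2 * cf b2 k w‖ + ‖(n:ℂ) * w * cf b1 k w‖)
            + ‖(2 * psum α1 w * w^2) * cf b1 k w‖) + ‖w^2 * sqf b1 k w‖ := by
            apply add_le_add_left (add_le_add_left (norm_sub_le _ _) _)
        _ ≤ ((((r/2)^2*C2) * X + ((n:ℝ)*(r/2)*C1) * X) + (2*Γ*(r/2)^2*C1) * X)
            + ((r/2)^2*CQ) * (((k:ℝ)+1) * X) := by
            apply add_le_add (add_le_add (add_le_add t1 t2) t3) t4
        _ = ((r/2)^2*C2) * X + ((n:ℝ)*(r/2)*C1) * X + (2*Γ*(r/2)^2*C1) * X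
            + ((r/2)^2*CQ) * (((k:ℝ)+1) * X) := by ring
    refine htotal.trans ?_
    have hfin : ((r/2)^2*C2) * X + ((n:ℝ)*(r/2)*C1) * X + (2*Γ*(r/2)^2*C1) * X
        + ((r/2)^2*CQ) * (((k:ℝ)+1) * X) ≤ K * (((k:ℝ)+1) * X) := by
      have a1 : ((r/2)^2*C2) * X ≤ ((r/2)^2*C2) * (((k:ℝ)+1) * X) :=
        mul_le_mul_of_nonneg_left hXk (by positivity)
      have a2 : ((n:ℝ)*(r/2)*C1) * X ≤ ((n:ℝ)*(r/2)*C1) * (((k:ℝ)+1) * X) :=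
        mul_le_mul_of_nonneg_left hXk (by positivity)
      have a3 : (2*Γ*(r/2)^2*C1) * X ≤ (2*Γ*(r/2)^2*C1) * (((k:ℝ)+1) * X) :=
        mul_le_mul_of_nonneg_left hXk (by positivity)
      have hKexp : K * (((k:ℝ)+1) * X) = ((r/2)^2*C2) * (((k:ℝ)+1) * X)
          + ((n:ℝ)*(r/2)*C1) * (((k:ℝ)+1) * X) + (2*Γ*(r/2)^2*C1) * (((k:ℝ)+1) * X)
          + ((r/2)^2*CQ) * (((k:ℝ)+1) * X) := by
        rw [hKdef]; ring
      rw [hKexp]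
      linarith
    exact hfin.trans (le_of_eq (by simp only [hudef, hXdef]))
  -- apply the key vanishing lemma on the half ball
  have hFdOn : DifferentiableOn ℂ F (Metric.ball (0:ℂ) (r/2) \ {0}) := by
    intro w hwmem
    exact (hFdiffC w (lt_trans (mem_ball_zero_iff.mp hwmem.1) (by linarith))
      hwmem.2).differentiableWithinAt
  have hFe' : ∀ w : ℂ, ‖w‖ < r/2 → w ≠ 0 →
      F w = ∑' k, e k w * (starRingEnd ℂ w)^(k+1) := fun w hw hw0 =>
    hFe w (lt_trans hw (by linarith)) hw0
  have hvan := key_vanish hs₀pos F e u hu0 hu he hbd hFdOn hFe'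
  -- extend the vanishing to the whole punctured ball by the identity theorem
  have hopenP : IsOpen (Metric.ball (0:ℂ) r \ {0}) :=
    Metric.isOpen_ball.sdiff isClosed_singleton
  have hFdOnP : DifferentiableOn ℂ F (Metric.ball (0:ℂ) r \ {0}) := by
    intro w hwmem
    exact (hFdiffC w (mem_ball_zero_iff.mp hwmem.1) hwmem.2).differentiableWithinAt
  have hFa : AnalyticOnNhd ℂ F (Metric.ball (0:ℂ) r \ {0}) :=
    hFdOnP.analyticOnNhd hopenP
  have hPeq : Metric.ball (0:ℂ) r \ {0} = {z : ℂ | 0 < ‖z‖ ∧ ‖z‖ < r} := by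
    ext w
    simp only [mem_diff, mem_ball_zero_iff, mem_singleton_iff, mem_setOf_eq, norm_pos_iff]
    tauto
  have hpre : IsPreconnected (Metric.ball (0:ℂ) r \ {0}) := by
    rw [hPeq]
    exact isPreconnected_annulus le_rfl
  have hw₁mem : ((r/4 : ℝ) : ℂ) ∈ Metric.ball (0:ℂ) r \ {0} := by
    constructor
    · rw [mem_ball_zero_iff, Complex.norm_real, Real.norm_eq_abs,
        _root_.abs_of_pos (by linarith : (0:ℝ) < r/4)]
      linarith
    · simp only [mem_singleton_iff, Complex.ofReal_eq_zero]
      intro h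
      linarith
  have hfreq : ∃ᶠ z in nhdsWithin ((r/4:ℝ):ℂ) {((r/4:ℝ):ℂ)}ᶜ, F z = 0 := by
    apply Filter.Eventually.frequently
    apply Filter.Eventually.filter_mono nhdsWithin_le_nhds
    filter_upwards [Metric.ball_mem_nhds ((r/4:ℝ):ℂ) (by linarith : (0:ℝ) < r/8)]
      with z hz
    have hzdist : ‖z - ((r/4:ℝ):ℂ)‖ < r/8 := by
      rw [← dist_eq_norm]
      exact hz
    have hc : ‖((r/4:ℝ):ℂ)‖ = r/4 := by
      rw [Complex.norm_real, Real.norm_eq_abs, _root_.abs_of_pos (by linarith : (0:ℝ) < r/4)]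
    have hzn : ‖z‖ < r/2 := by
      calc ‖z‖ = ‖(z - ((r/4:ℝ):ℂ)) + ((r/4:ℝ):ℂ)‖ := by ring_nf
        _ ≤ ‖z - ((r/4:ℝ):ℂ)‖ + ‖((r/4:ℝ):ℂ)‖ := norm_add_le _ _
        _ < r/8 + r/4 := by rw [hc] at *; linarith
        _ ≤ r/2 := by linarith
    have hz0 : z ≠ 0 := by
      intro h0
      rw [h0] at hzdist
      rw [zero_sub, norm_neg, hc] at hzdist
      linarith
    exact hvan z hzn hz0
  have hFzero := hFa.eqOn_zero_of_preconnected_of_frequently_eq_zero hpre hw₁mem hfreq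
  intro z hzball hz0
  have hmem : z ∈ Metric.ball (0:ℂ) r \ {0} := ⟨hzball, hz0⟩
  have hF0 : F z = 0 := hFzero hmem
  have hz2 : z^2 ≠ 0 := pow_ne_zero 2 hz0
  have : z^2 * H z = 0 := hF0
  exact (mul_eq_zero.mp this).resolve_left hz2
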